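/- Equivalent characterizations of an anytime-valid p-value: let (F_t)_{t∈ℕ} be a filtration on a probability space and (P_t)_{t∈ℕ} an (F_t)-adapted process with values in [0,1]; for an (F_t)-stopping time τ taking values in ℕ ∪ {∞}, set P_τ := 1 on the event {τ = ∞}. Then the following are equivalent: (i) Pr(∃ t ∈ ℕ : P_t ≤ u) ≤ u for every u ∈ [0,1]; (ii) Pr(P_τ ≤ u) ≤ u for every u ∈ [0,1] and every (F_t)-stopping time τ. -/

import Mathlib

open MeasureTheory

/-- **Equivalent characterizations of an anytime-valid p-value.**
Let `(𝓕 t)` be a filtration, `(P t)` an adapted `[0,1]`-valued process, and for a stopping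
time `τ : Ω → ℕ∞` (i.e. `{τ ≤ t} ∈ 𝓕 t` for all `t`) set `P_τ := 1` on `{τ = ∞}`. Then the
following are equivalent:
(i) `Pr(∃ t, P t ≤ u) ≤ u` for all `u ∈ [0,1]`;
(ii) `Pr(P_τ ≤ u) ≤ u` for all `u ∈ [0,1]` and all stopping times `τ`. -/
theorem anytime_valid_pvalue_iff_stopped
    {Ω : Type*} {m : MeasurableSpace Ω} (μ : Measure Ω) [IsProbabilityMeasure μ]
    (𝓕 : Filtration ℕ m) (P : ℕ → Ω → ℝ)
    (hadapted : Adapted 𝓕 P)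
    (hPrange : ∀ t ω, P t ω ∈ Set.Icc (0 : ℝ) 1) :
    (∀ u ∈ Set.Icc (0 : ℝ) 1, μ {ω | ∃ t : ℕ, P t ω ≤ u} ≤ ENNReal.ofReal u) ↔
      (∀ τ : Ω → ℕ∞, (∀ t : ℕ, MeasurableSet[𝓕 t] {ω | τ ω ≤ (t : ℕ∞)}) →
        ∀ u ∈ Set.Icc (0 : ℝ) 1,
          μ {ω | (if h : τ ω ≠ ⊤ then P ((τ ω).toNat) ω else 1) ≤ u}
            ≤ ENNReal.ofReal u) := by
  constructor
  · intro h τ hτ u hu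
    rcases lt_or_ge u 1 with hu1 | hu1
    · refine le_trans (measure_mono ?_) (h u hu)
      intro ω hω
      simp only [Set.mem_setOf_eq] at hω ⊢
      by_cases hτω : τ ω ≠ ⊤
      · exact ⟨(τ ω).toNat, by simpa [hτω] using hω⟩
      · simp only [dif_neg hτω] at hω
        linarith
    · rw [show u = 1 from le_antisymm hu.2 hu1]
      simpa using prob_le_one
  · intro h u hu
    classical
    rcases lt_or_ge u 1 with hu1 | hu1
    · set τ : Ω → ℕ∞ := fun ω => if hω : ∃ t, P t ω ≤ u then (Nat.find hω : ℕ∞) else ⊤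
        with hτdef
      have hst : ∀ t : ℕ, MeasurableSet[𝓕 t] {ω | τ ω ≤ (t : ℕ∞)} := by
        intro t
        have hset : {ω | τ ω ≤ (t : ℕ∞)} = ⋃ s ∈ Finset.range (t + 1), {ω | P s ω ≤ u} := by
          ext ω
          simp only [Set.mem_setOf_eq, Set.mem_iUnion, Finset.mem_range, Nat.lt_succ_iff]
          constructor
          · intro hle
            by_cases hω : ∃ s, P s ω ≤ u
            · have hτω : τ ω = (Nat.find hω : ℕ∞) := by simp [hτdef, hω]
              rw [hτω, Nat.cast_le] at hle
              exact ⟨Nat.find hω, hle, Nat.find_spec hω⟩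
            · simp [hτdef, hω] at hle
          · rintro ⟨s, hs, hPs⟩
            have hω : ∃ s, P s ω ≤ u := ⟨s, hPs⟩
            have hτω : τ ω = (Nat.find hω : ℕ∞) := by simp [hτdef, hω]
            rw [hτω, Nat.cast_le]
            exact le_trans (Nat.find_le hPs) hs
        rw [hset]
        refine MeasurableSet.biUnion (Finset.range (t + 1)).countable_toSet ?_
        intro s hs
        have hs' : s ≤ t := Nat.lt_succ_iff.mp (Finset.mem_range.mp hs)
        exact 𝓕.mono hs' _ (hadapted s measurableSet_Iic)
      refine le_trans (measure_mono ?_) (h τ hst u hu)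
      intro ω hω
      obtain ⟨t, ht⟩ := hω
      have hω' : ∃ s, P s ω ≤ u := ⟨t, ht⟩
      have hτω : τ ω = (Nat.find hω' : ℕ∞) := by simp [hτdef, hω']
      have hne : τ ω ≠ ⊤ := by simp [hτω]
      simp only [Set.mem_setOf_eq, dif_pos hne]
      have htoNat : (τ ω).toNat = Nat.find hω' := by simp [hτω]
      rw [htoNat]
      exact Nat.find_spec hω'
    · rw [show u = 1 from le_antisymm hu.2 hu1]
      simpa using prob_le_one
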